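/- Let f : B^d → ℝ be given by f(x) = Σ_{k=1}^K c_k σ((xᵀ,1)v_k) + (xᵀ,1)w for all x ∈ B^d, where K ≥ 0, c_k ∈ ℝ, w ∈ ℝ^{d+1}, and v_1,…,v_K ∈ S_0 satisfy v_i ≠ v_k and v_i ≠ -v_k for all 1 ≤ i ≠ k ≤ K. Then max{ ‖w‖₂, Σ_{k=1}^K |c_k| } ≤ κ(f) ≤ 2‖w‖₂ + Σ_{k=1}^K |c_k|. -/

import Mathlib

open MeasureTheory Real

noncomputable section

/-- Euclidean space ℝ^d. -/
abbrev E (d : ℕ) := EuclideanSpace ℝ (Fin d)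

/-- The ReLU function σ(t) = max{t, 0}. -/
def relu (t : ℝ) : ℝ := max t 0

/-- The quantity (xᵀ,1)v : the inner product of (x,1) ∈ ℝ^{d+1} with v ∈ ℝ^{d+1}. -/
def aff {d : ℕ} (x : E d) (v : E (d + 1)) : ℝ :=
  (∑ i : Fin d, x i * v i.castSucc) + v (Fin.last d)

/-- Parameters θ = (a_1, w_1, …, a_N, w_N) of a shallow ReLU network of width N. -/
abbrev Params (d N : ℕ) := (Fin N → ℝ) × (Fin N → E (d + 1))

/-- The network function f_θ(x) = Σ_i a_i σ((xᵀ,1) w_i). -/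
def networkFn {d N : ℕ} (θ : Params d N) (x : E d) : ℝ :=
  ∑ i, θ.1 i * relu (aff x (θ.2 i))

/-- The path norm κ(θ) = Σ_i |a_i| ‖w_i‖₂. -/
def pathNorm {d N : ℕ} (θ : Params d N) : ℝ :=
  ∑ i, |θ.1 i| * ‖θ.2 i‖

/-- The squared Euclidean norm ‖θ‖₂² of the parameter vector. -/
def paramNormSq {d N : ℕ} (θ : Params d N) : ℝ :=
  (∑ i, (θ.1 i) ^ 2) + ∑ i, ‖θ.2 i‖ ^ 2

/-- NN(N): functions on the unit ball B^d realized by a width-N shallow ReLU network. -/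
def NNclass (d N : ℕ) : Set (E d → ℝ) :=
  {f | ∃ θ : Params d N, ∀ x : E d, ‖x‖ ≤ 1 → f x = networkFn θ x}

/-- NN(N, M): functions realized by a width-N network with path norm κ(θ) ≤ M. -/
def NNclassM (d N : ℕ) (M : ℝ) : Set (E d → ℝ) :=
  {f | ∃ θ : Params d N, pathNorm θ ≤ M ∧ ∀ x : E d, ‖x‖ ≤ 1 → f x = networkFn θ x}

/-- κ(f) = inf{ Σ_j |c_j| : f(x) = Σ_j c_j σ((xᵀ,1)v_j) on B^d, v_j ∈ S^d }. -/
def kappaF {d : ℕ} (f : E d → ℝ) : ℝ :=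
  sInf {s | ∃ (m : ℕ) (c : Fin m → ℝ) (v : Fin m → E (d + 1)),
    (∀ j, ‖v j‖ = 1) ∧ (∀ x : E d, ‖x‖ ≤ 1 → f x = ∑ j, c j * relu (aff x (v j))) ∧
    s = ∑ j, |c j|}

/-- S_- = {v ∈ S^d : v_{d+1} ≤ -√2/2}. -/
def Sminus (d : ℕ) : Set (E (d + 1)) :=
  {v | ‖v‖ = 1 ∧ v (Fin.last d) ≤ -(Real.sqrt 2 / 2)}

/-- S_+ = -S_-. -/
def Splus (d : ℕ) : Set (E (d + 1)) := {v | -v ∈ Sminus d}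

/-- S_0 = S^d \ (S_- ∪ S_+). -/
def Szero (d : ℕ) : Set (E (d + 1)) := {v | ‖v‖ = 1} \ (Sminus d ∪ Splus d)

/-- The variation class F_σ(M): functions f(x) = ∫_{S^d} σ((xᵀ,1)v) dμ(v) for a signed Radon
measure μ on S^d with ‖μ‖ ≤ M (represented by its Jordan decomposition μ = μp - μn). -/
def Fsigma (d : ℕ) (M : ℝ) : Set (E d → ℝ) :=
  {f | ∃ μp μn : Measure (E (d + 1)), IsFiniteMeasure μp ∧ IsFiniteMeasure μn ∧
    μp {v | ‖v‖ = 1}ᶜ = 0 ∧ μn {v | ‖v‖ = 1}ᶜ = 0 ∧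
    (μp Set.univ).toReal + (μn Set.univ).toReal ≤ M ∧
    ∀ x : E d, ‖x‖ ≤ 1 →
      f x = (∫ v, relu (aff x v) ∂μp) - ∫ v, relu (aff x v) ∂μn}

/-- Empirical L²(μ_n) norm: ‖f‖_{L²(μ_n)} = ((1/n) Σ_i f(X_i)²)^{1/2}. -/
def empNorm {d n : ℕ} (X : Fin n → E d) (f : E d → ℝ) : ℝ :=
  Real.sqrt ((∑ i, (f (X i)) ^ 2) / n)

/-- Local complexity G_n(F; δ, ξ) = E[ sup { |(1/n) Σ_i ξ_i f(X_i)| : f ∈ F, ‖f‖_{L²(μ_n)} ≤ δ} ]. -/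
def localComplexity {d n : ℕ} {Ω : Type*} [MeasurableSpace Ω] (P : Measure Ω)
    (F : Set (E d → ℝ)) (X : Fin n → E d) (δ : ℝ) (ξ : Fin n → Ω → ℝ) : ℝ :=
  ∫ ω, sSup {r | ∃ f ∈ F, empNorm X f ≤ δ ∧ r = |(∑ i, ξ i ω * f (X i)) / n|} ∂P

/-- star(F) = {a f : f ∈ F, a ∈ [0,1]}. -/
def starHull {d : ℕ} (F : Set (E d → ℝ)) : Set (E d → ℝ) :=
  {g | ∃ f ∈ F, ∃ a : ℝ, 0 ≤ a ∧ a ≤ 1 ∧ g = fun x => a * f x}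

/-- ∂F = {f₁ - f₂ : f₁, f₂ ∈ F}. -/
def diffClass {d : ℕ} (F : Set (E d → ℝ)) : Set (E d → ℝ) :=
  {g | ∃ f₁ ∈ F, ∃ f₂ ∈ F, g = f₁ - f₂}

/-- Truncation operator T_b. -/
def truncate {d : ℕ} (b : ℝ) (f : E d → ℝ) : E d → ℝ := fun x => max (-b) (min b (f x))

/-- The Hölder ball H^α on B^d. -/
def HolderBall (d : ℕ) (α : ℝ) : Set (E d → ℝ) :=
  {h | ∃ (r : ℕ) (β : ℝ) (g : E d → ℝ), α = r + β ∧ 0 < β ∧ β ≤ 1 ∧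
    (∀ x : E d, ‖x‖ ≤ 1 → g x = h x) ∧ ContDiff ℝ r g ∧
    (∀ k : ℕ, k ≤ r → ∀ x, ‖iteratedFDeriv ℝ k g x‖ ≤ 1) ∧
    (∀ x y : E d, ‖iteratedFDeriv ℝ r g x - iteratedFDeriv ℝ r g y‖ ≤ ‖x - y‖ ^ β)}
namespace St2
variable {d : ℕ}

/-- spatial part -/
def sp {d : ℕ} (v : E (d+1)) : E d := WithLp.toLp 2 (fun i : Fin d => v i.castSucc)

def dot {d : ℕ} (x y : E d) : ℝ := ∑ i, x i * y i

lemma dot_eq_inner (x y : E d) : dot x y = inner ℝ x y := by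
  simp [dot, PiLp.inner_apply, RCLike.inner_apply, mul_comm]

lemma abs_dot_le (x y : E d) : |dot x y| ≤ ‖x‖ * ‖y‖ := by
  rw [dot_eq_inner]; exact abs_real_inner_le_norm x y

lemma dot_self (x : E d) : dot x x = ‖x‖ ^ 2 := by
  rw [dot_eq_inner, real_inner_self_eq_norm_sq]

lemma aff_eq (x : E d) (v : E (d+1)) : aff x v = dot x (sp v) + v (Fin.last d) := rfl

lemma norm_sq_split (v : E (d+1)) : ‖v‖ ^ 2 = ‖sp v‖ ^ 2 + (v (Fin.last d)) ^ 2 := by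
  have h1 : ‖v‖ ^ 2 = ∑ i, (v i) ^ 2 := by
    rw [EuclideanSpace.norm_eq, Real.sq_sqrt (by positivity)]
    simp [Real.norm_eq_abs, sq_abs]
  have h2 : ‖sp v‖ ^ 2 = ∑ i : Fin d, (v i.castSucc) ^ 2 := by
    rw [EuclideanSpace.norm_eq, Real.sq_sqrt (by positivity)]
    simp [sp, Real.norm_eq_abs, sq_abs]
  rw [h1, h2, Fin.sum_univ_castSucc]

/-- linear map version of aff -/
def affMap (x : E d) : E (d+1) →ₗ[ℝ] ℝ where
  toFun v := aff x v
  map_add' a b := by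
    simp only [aff, PiLp.add_apply, mul_add, Finset.sum_add_distrib]
    ring
  map_smul' t a := by
    simp only [aff, PiLp.smul_apply, smul_eq_mul, RingHom.id_apply, mul_add,
      Finset.mul_sum, mul_left_comm]

lemma affMap_eq (x : E d) (v : E (d+1)) : affMap x v = aff x v := rfl

lemma aff_add (x : E d) (a b : E (d+1)) : aff x (a + b) = aff x a + aff x b :=
  (affMap x).map_add a b

lemma aff_smul (x : E d) (t : ℝ) (a : E (d+1)) : aff x (t • a) = t * aff x a :=
  (affMap x).map_smul t a

lemma aff_neg (x : E d) (a : E (d+1)) : aff x (-a) = - aff x a :=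
  (affMap x).map_neg a

lemma aff_sub (x : E d) (a b : E (d+1)) : aff x (a - b) = aff x a - aff x b :=
  (affMap x).map_sub a b

lemma aff_sum {ι : Type*} (x : E d) (s : Finset ι) (g : ι → E (d+1)) :
    aff x (∑ j ∈ s, g j) = ∑ j ∈ s, aff x (g j) := map_sum (affMap x) g s

lemma aff_add_smul (x z : E d) (t : ℝ) (v : E (d+1)) :
    aff (x + t • z) v = aff x v + t * dot z (sp v) := by
  simp only [aff, PiLp.add_apply, PiLp.smul_apply, smul_eq_mul, dot, sp, add_mul,
    Finset.sum_add_distrib, Finset.mul_sum, mul_assoc]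
  ring

lemma sp_neg (v : E (d+1)) : sp (-v) = - sp v := by
  ext i; simp [sp]

lemma relu_nonneg (t : ℝ) : 0 ≤ relu t := le_max_right _ _
lemma relu_of_nonneg {t : ℝ} (h : 0 ≤ t) : relu t = t := max_eq_left h
lemma relu_of_nonpos {t : ℝ} (h : t ≤ 0) : relu t = 0 := max_eq_right h
lemma relu_sub_relu_neg (t : ℝ) : relu t - relu (-t) = t := by
  rcases le_or_gt t 0 with h | h
  · rw [relu_of_nonpos h, relu_of_nonneg (neg_nonneg.2 h)]; ring
  · rw [relu_of_nonneg h.le, relu_of_nonpos (neg_nonpos.2 h.le)]; ring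

lemma relu_bracket {α β t : ℝ} (h : |t * α| < |β|) :
    relu (β + t * α) + relu (β - t * α) - 2 * relu β = 0 := by
  rcases lt_or_ge 0 β with hb | hb
  · have h1 : 0 ≤ β + t * α := by cases abs_lt.1 h; linarith [abs_nonneg (t*α), le_abs_self (t*α), neg_abs_le (t*α), abs_of_pos hb]
    have h2 : 0 ≤ β - t * α := by linarith [le_abs_self (t*α), abs_of_pos hb, abs_lt.1 h]
    rw [relu_of_nonneg h1, relu_of_nonneg h2, relu_of_nonneg hb.le]; ring
  · have hb' : β < 0 := by
      rcases lt_or_eq_of_le hb with h' | h'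
      · exact h'
      · exfalso; rw [h'] at h; simp at h; linarith [abs_nonneg (t * α), mul_nonneg (abs_nonneg t) (abs_nonneg α)]
    have h1 : β + t * α ≤ 0 := by linarith [neg_abs_le (t*α), abs_of_neg hb', abs_lt.1 h]
    have h2 : β - t * α ≤ 0 := by linarith [le_abs_self (t*α), abs_of_neg hb', abs_lt.1 h]
    rw [relu_of_nonpos h1, relu_of_nonpos h2, relu_of_nonpos hb]; ring

lemma relu_bracket0 (α t : ℝ) (ht : 0 ≤ t) :
    relu (0 + t * α) + relu (0 - t * α) - 2 * relu 0 = t * |α| := by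
  have : relu 0 = 0 := relu_of_nonpos le_rfl
  rcases le_or_gt 0 α with h | h
  · rw [zero_add, zero_sub, relu_of_nonneg (by positivity), relu_of_nonpos (by simp; positivity), this, abs_of_nonneg h]; ring
  · rw [zero_add, zero_sub, relu_of_nonpos (by nlinarith), relu_of_nonneg (by nlinarith), this, abs_of_neg h]; ring


lemma dot_comm (x y : E d) : dot x y = dot y x := by
  simp [dot, mul_comm]

lemma dot_smul_left (t : ℝ) (y x : E d) : dot (t • y) x = t * dot y x := by
  simp [dot, PiLp.smul_apply, smul_eq_mul, Finset.mul_sum, mul_assoc]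

lemma dot_add_left (y z x : E d) : dot (y + z) x = dot y x + dot z x := by
  simp [dot, PiLp.add_apply, add_mul, Finset.sum_add_distrib]

lemma dot_sub_left (y z x : E d) : dot (y - z) x = dot y x - dot z x := by
  simp [dot, PiLp.sub_apply, sub_mul, Finset.sum_sub_distrib]

lemma dot_zero_left (x : E d) : dot 0 x = 0 := by simp [dot]

lemma eq_zero_of_aff_zero (w : E (d+1)) (h : ∀ x : E d, ‖x‖ ≤ 1 → aff x w = 0) :
    w = 0 := by
  have hlast : w (Fin.last d) = 0 := by
    have := h 0 (by simp)
    simpa [aff] using this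
  have hcs : ∀ i : Fin d, w i.castSucc = 0 := by
    intro i
    have hn : ‖(EuclideanSpace.single i (1:ℝ))‖ ≤ 1 := by
      rw [EuclideanSpace.norm_single]; simp
    have := h _ hn
    rw [aff] at this
    rw [Finset.sum_eq_single i (fun j _ hji => by
      rw [EuclideanSpace.single_apply, if_neg hji, zero_mul]) (by simp)] at this
    rw [EuclideanSpace.single_apply, if_pos rfl, one_mul, hlast, add_zero] at this
    exact this
  ext j
  refine Fin.lastCases ?_ ?_ j
  · simpa using hlast
  · intro i; simpa using hcs i

lemma exists_small_avoiding {ι : Type*} (s : Finset ι) (q : ι → E d) (r : ι → ℝ)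
    (hnz : ∀ j ∈ s, q j ≠ 0 ∨ r j ≠ 0) {ε : ℝ} (hε : 0 < ε) :
    ∃ y : E d, ‖y‖ < ε ∧ ∀ j ∈ s, dot y (q j) + r j ≠ 0 := by
  classical
  induction s using Finset.induction with
  | empty => exact ⟨0, by simpa, by simp⟩
  | @insert j s hj ih =>
    obtain ⟨y, hy, hys⟩ := ih (fun i hi => hnz i (Finset.mem_insert_of_mem hi))
    by_cases h0 : dot y (q j) + r j ≠ 0
    · refine ⟨y, hy, ?_⟩
      intro i hi
      rcases Finset.mem_insert.1 hi with rfl | hi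
      · exact h0
      · exact hys i hi
    · push_neg at h0
      have hqj : q j ≠ 0 := by
        rcases hnz j (Finset.mem_insert_self j s) with h | h
        · exact h
        · intro hq0
          rw [hq0] at h0
          rw [dot_comm, dot_zero_left, zero_add] at h0
          exact h h0
      have hq2 : (0:ℝ) < ‖q j‖ ^ 2 := by
        have := norm_pos_iff.2 hqj
        positivity
      -- eventually facts in 𝓝[≠] (0:ℝ)
      have ev1 : ∀ᶠ t in nhdsWithin (0:ℝ) {0}ᶜ, ‖y + t • q j‖ < ε := by
        apply Filter.Eventually.filter_mono nhdsWithin_le_nhds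
        have hcont : Continuous fun t : ℝ => ‖y + t • q j‖ := by continuity
        have := hcont.continuousAt (x := (0:ℝ))
        have h0' : ‖y + (0:ℝ) • q j‖ < ε := by simpa using hy
        exact this.eventually_lt continuousAt_const h0'
      have ev2 : ∀ᶠ t in nhdsWithin (0:ℝ) {0}ᶜ, ∀ i ∈ s, dot (y + t • q j) (q i) + r i ≠ 0 := by
        rw [Filter.eventually_all_finset]
        intro i hi
        apply Filter.Eventually.filter_mono nhdsWithin_le_nhds
        have hcont : Continuous fun t : ℝ => dot (y + t • q j) (q i) + r i := by
          have : (fun t : ℝ => dot (y + t • q j) (q i) + r i)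
              = fun t : ℝ => (dot y (q i) + t * dot (q j) (q i)) + r i := by
            funext t
            rw [dot_add_left, dot_smul_left]
          rw [this]; continuity
        have hval : dot (y + (0:ℝ) • q j) (q i) + r i ≠ 0 := by
          simpa using hys i hi
        exact hcont.continuousAt.eventually_ne hval
      have ev3 : ∀ᶠ t in nhdsWithin (0:ℝ) {0}ᶜ, dot (y + t • q j) (q j) + r j ≠ 0 := by
        filter_upwards [self_mem_nhdsWithin] with t ht
        have : dot (y + t • q j) (q j) + r j = t * ‖q j‖ ^ 2 := by
          rw [dot_add_left, dot_smul_left, dot_self]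
          linarith [h0]
        rw [this]
        exact mul_ne_zero (by simpa using ht) (ne_of_gt hq2)
      obtain ⟨t, ⟨ht1, ht2⟩, ht3⟩ := ((ev1.and ev2).and ev3).exists
      refine ⟨y + t • q j, ht1, ?_⟩
      intro i hi
      rcases Finset.mem_insert.1 hi with rfl | hi
      · exact ht3
      · exact ht2 i hi

lemma dot_smul_right (t : ℝ) (x y : E d) : dot x (t • y) = t * dot x y := by
  rw [dot_comm, dot_smul_left, dot_comm]

lemma dot_sub_right (x y z : E d) : dot x (y - z) = dot x y - dot x z := by
  rw [dot_comm, dot_sub_left, dot_comm z x, dot_comm y x]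

lemma sq_sqrt2_half : (Real.sqrt 2 / 2) ^ 2 = 1 / 2 := by
  rw [div_pow, Real.sq_sqrt (by norm_num : (0:ℝ) ≤ 2)]
  norm_num

lemma exists_generic {ι : Type*} (s : Finset ι) (vv : ι → E (d+1))
    (hvs : ∀ j ∈ s, ‖vv j‖ = 1)
    (u : E (d+1)) (hu : ‖u‖ = 1) (hb : |u (Fin.last d)| < Real.sqrt 2 / 2) :
    ∃ x : E d, ‖x‖ < 1 ∧ aff x u = 0 ∧
      ∀ j ∈ s, vv j ≠ u → vv j ≠ -u → aff x (vv j) ≠ 0 := by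
  classical
  set b := u (Fin.last d) with hbdef
  set a := sp u with hadef
  have hb2 : b ^ 2 < 1 / 2 := by
    have h1 : |b| ^ 2 < (Real.sqrt 2 / 2) ^ 2 := by
      apply pow_lt_pow_left₀ hb (abs_nonneg b)
      norm_num
    rw [sq_abs, sq_sqrt2_half] at h1
    exact h1
  have ha2 : ‖a‖ ^ 2 = 1 - b ^ 2 := by
    have := norm_sq_split u
    rw [hu] at this
    nlinarith [this]
  have ha2half : 1 / 2 < ‖a‖ ^ 2 := by rw [ha2]; linarith
  have hapos : 0 < ‖a‖ := by nlinarith [norm_nonneg a]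
  have ha2ne : ‖a‖ ^ 2 ≠ 0 := by positivity
  have hblta : |b| < ‖a‖ := by
    apply lt_of_pow_lt_pow_left₀ 2 (norm_nonneg a)
    rw [sq_abs]; linarith
  set x0 : E d := (-(b / ‖a‖ ^ 2)) • a with hx0def
  have hdotx0a : dot x0 a = -b := by
    rw [hx0def, dot_smul_left, dot_self]
    field_simp
  have hx0aff : aff x0 u = 0 := by
    rw [aff_eq, ← hadef, ← hbdef, hdotx0a]; ring
  have hx0norm : ‖x0‖ < 1 := by
    rw [hx0def, norm_smul, Real.norm_eq_abs, abs_neg, abs_div, abs_of_nonneg (by positivity : (0:ℝ) ≤ ‖a‖ ^ 2)]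
    have : |b| / ‖a‖ ^ 2 * ‖a‖ = |b| / ‖a‖ := by
      field_simp
    rw [this, div_lt_one hapos]
    exact hblta
  set ε : ℝ := (1 - ‖x0‖) / 2 with hεdef
  have hε : 0 < ε := by rw [hεdef]; linarith
  set q : ι → E d := fun j => sp (vv j) - (dot (sp (vv j)) a / ‖a‖ ^ 2) • a with hqdef
  set r : ι → ℝ := fun j => aff x0 (vv j) with hrdef
  set s' : Finset ι := s.filter (fun j => vv j ≠ u ∧ vv j ≠ -u) with hs'def
  have hnz : ∀ j ∈ s', q j ≠ 0 ∨ r j ≠ 0 := by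
    intro j hj
    rw [hs'def, Finset.mem_filter] at hj
    obtain ⟨hjs, hne1, hne2⟩ := hj
    by_contra hcon
    push_neg at hcon
    obtain ⟨hq0, hr0⟩ := hcon
    set lam := dot (sp (vv j)) a / ‖a‖ ^ 2 with hlamdef
    have hspj : sp (vv j) = lam • a := by
      rw [hqdef] at hq0
      simpa [sub_eq_zero] using hq0
    have hbj : vv j (Fin.last d) = lam * b := by
      have h1 : aff x0 (vv j) = 0 := hr0
      rw [aff_eq, hspj, dot_comm, dot_smul_left, dot_comm a x0, hdotx0a] at h1
      linarith
    have hvju : vv j = lam • u := by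
      ext i
      refine Fin.lastCases ?_ ?_ i
      · rw [hbj]
        simp [PiLp.smul_apply, smul_eq_mul, ← hbdef]
      · intro i
        have : sp (vv j) i = (lam • a) i := by rw [hspj]
        simpa [sp, PiLp.smul_apply, smul_eq_mul, hadef] using this
    have hlam1 : |lam| = 1 := by
      have := hvs j hjs
      rw [hvju, norm_smul, hu, Real.norm_eq_abs, mul_one] at this
      exact this
    rcases abs_eq (by norm_num : (0:ℝ) ≤ 1) |>.1 hlam1 with h1 | h1
    · exact hne1 (by rw [hvju, h1, one_smul])
    · exact hne2 (by rw [hvju, h1, neg_smul, one_smul])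
  obtain ⟨y, hy, hys⟩ := exists_small_avoiding s' q r hnz hε
  set z : E d := y - (dot y a / ‖a‖ ^ 2) • a with hzdef
  have hznorm : ‖z‖ ≤ 2 * ‖y‖ := by
    have h1 : ‖(dot y a / ‖a‖ ^ 2) • a‖ ≤ ‖y‖ := by
      rw [norm_smul, Real.norm_eq_abs, abs_div, abs_of_nonneg (by positivity : (0:ℝ) ≤ ‖a‖ ^ 2)]
      have h2 := abs_dot_le y a
      rw [div_mul_eq_mul_div]
      rw [div_le_iff₀ (by positivity)]
      nlinarith [abs_nonneg (dot y a)]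
    calc ‖z‖ ≤ ‖y‖ + ‖(dot y a / ‖a‖ ^ 2) • a‖ := norm_sub_le _ _
    _ ≤ 2 * ‖y‖ := by linarith
  have hdotza : dot z a = 0 := by
    rw [hzdef, dot_sub_left, dot_smul_left, dot_self]
    field_simp; ring
  refine ⟨x0 + z, ?_, ?_, ?_⟩
  · calc ‖x0 + z‖ ≤ ‖x0‖ + ‖z‖ := norm_add_le _ _
      _ ≤ ‖x0‖ + 2 * ‖y‖ := by linarith
      _ < ‖x0‖ + 2 * ε := by linarith
      _ = 1 := by rw [hεdef]; ring
  · have := aff_add_smul x0 z 1 u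
    rw [one_smul] at this
    rw [this, hx0aff, ← hadef, hdotza]; ring
  · intro j hjs hne1 hne2
    have hjs' : j ∈ s' := by
      rw [hs'def, Finset.mem_filter]; exact ⟨hjs, hne1, hne2⟩
    have heq : aff (x0 + z) (vv j) = r j + dot y (q j) := by
      have h1 := aff_add_smul x0 z 1 (vv j)
      rw [one_smul] at h1
      rw [h1, hrdef]
      congr 1
      rw [hzdef, hqdef, dot_sub_left, dot_smul_left, dot_sub_right, dot_smul_right]
      rw [dot_comm a (sp (vv j))]
      ring
    rw [heq, add_comm]
    exact hys j hjs'

lemma dot_neg_right (x y : E d) : dot x (-y) = - dot x y := by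
  simp [dot, PiLp.neg_apply, mul_neg, Finset.sum_neg_distrib]

set_option maxHeartbeats 2000000 in
open Classical in
lemma kink {ι : Type*} (s : Finset ι) (c : ι → ℝ) (vv : ι → E (d+1))
    (hvs : ∀ j ∈ s, ‖vv j‖ = 1) (w : E (d+1))
    (hsum : ∀ x : E d, ‖x‖ ≤ 1 → (∑ j ∈ s, c j * relu (aff x (vv j))) + aff x w = 0)
    (u : E (d+1)) (hu : ‖u‖ = 1) (hb : |u (Fin.last d)| < Real.sqrt 2 / 2) :
    ∑ j ∈ s.filter (fun j => vv j = u ∨ vv j = -u), c j = 0 := by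
  classical
  obtain ⟨xs, hxs1, hxs2, hgen⟩ := exists_generic s vv hvs u hu hb
  set a := sp u with hadef
  have ha2 : ‖a‖ ^ 2 = 1 - (u (Fin.last d)) ^ 2 := by
    have := norm_sq_split u
    rw [hu] at this
    nlinarith [this]
  have hb2 : (u (Fin.last d)) ^ 2 < 1 / 2 := by
    have h1 : |u (Fin.last d)| ^ 2 < (Real.sqrt 2 / 2) ^ 2 :=
      pow_lt_pow_left₀ hb (abs_nonneg _) (by norm_num)
    rw [sq_abs, sq_sqrt2_half] at h1
    exact h1
  have ha2pos : 0 < ‖a‖ ^ 2 := by rw [ha2]; linarith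
  -- eventually facts
  have ev1 : ∀ᶠ t in nhdsWithin (0:ℝ) (Set.Ioi 0), ‖xs + t • a‖ ≤ 1 := by
    apply Filter.Eventually.filter_mono nhdsWithin_le_nhds
    have hcont : Continuous fun t : ℝ => ‖xs + t • a‖ := by continuity
    have h0 : ‖xs + (0:ℝ) • a‖ < 1 := by simpa using hxs1
    filter_upwards [hcont.continuousAt.eventually_lt continuousAt_const h0] with t ht
    exact ht.le
  have ev1' : ∀ᶠ t in nhdsWithin (0:ℝ) (Set.Ioi 0), ‖xs + (-t) • a‖ ≤ 1 := by
    apply Filter.Eventually.filter_mono nhdsWithin_le_nhds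
    have hcont : Continuous fun t : ℝ => ‖xs + (-t) • a‖ := by continuity
    have h0 : ‖xs + (-(0:ℝ)) • a‖ < 1 := by simpa using hxs1
    filter_upwards [hcont.continuousAt.eventually_lt continuousAt_const h0] with t ht
    exact ht.le
  have ev2 : ∀ᶠ t in nhdsWithin (0:ℝ) (Set.Ioi 0), ∀ j ∈ s,
      vv j ≠ u → vv j ≠ -u → |t * dot a (sp (vv j))| < |aff xs (vv j)| := by
    rw [Filter.eventually_all_finset]
    intro j hj
    by_cases hcase : vv j ≠ u ∧ vv j ≠ -u
    · apply Filter.Eventually.filter_mono nhdsWithin_le_nhds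
      have hβ : 0 < |aff xs (vv j)| := abs_pos.2 (hgen j hj hcase.1 hcase.2)
      have hcont : Continuous fun t : ℝ => |t * dot a (sp (vv j))| := by continuity
      have h0 : |(0:ℝ) * dot a (sp (vv j))| < |aff xs (vv j)| := by simpa using hβ
      filter_upwards [hcont.continuousAt.eventually_lt continuousAt_const h0] with t ht
      exact fun _ _ => ht
    · apply Filter.Eventually.of_forall
      intro t h1 h2
      exact absurd ⟨h1, h2⟩ hcase
  have ev3 : ∀ᶠ t in nhdsWithin (0:ℝ) (Set.Ioi 0), (0:ℝ) < t := by
    filter_upwards [self_mem_nhdsWithin] with t ht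
    exact ht
  obtain ⟨t, ⟨⟨ht1, ht1'⟩, ht2⟩, ht3⟩ := (((ev1.and ev1').and ev2).and ev3).exists
  -- the three evaluation points
  have hp := hsum (xs + t • a) ht1
  have hm := hsum (xs + (-t) • a) ht1'
  have hz := hsum xs hxs1.le
  -- per-index bracket
  set g : ι → ℝ := fun j =>
    relu (aff (xs + t • a) (vv j)) + relu (aff (xs + (-t) • a) (vv j))
      - 2 * relu (aff xs (vv j)) with hgdef
  have hkey : ∑ j ∈ s, c j * g j = 0 := by
    have hexp : ∑ j ∈ s, c j * g j =
        (∑ j ∈ s, c j * relu (aff (xs + t • a) (vv j)))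
        + (∑ j ∈ s, c j * relu (aff (xs + (-t) • a) (vv j)))
        - 2 * (∑ j ∈ s, c j * relu (aff xs (vv j))) := by
      rw [Finset.mul_sum, ← Finset.sum_add_distrib, ← Finset.sum_sub_distrib]
      apply Finset.sum_congr rfl
      intro j _
      rw [hgdef]; ring
    rw [hexp]
    have e1 : aff (xs + t • a) w = aff xs w + t * dot a (sp w) := aff_add_smul _ _ _ _
    have e2 : aff (xs + (-t) • a) w = aff xs w + (-t) * dot a (sp w) := aff_add_smul _ _ _ _
    linarith [hp, hm, hz, e1, e2]
  have hsplit := Finset.sum_filter_add_sum_filter_not s (fun j => vv j = u ∨ vv j = -u)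
    (fun j => c j * g j)
  rw [← hsplit] at hkey
  have hnot : ∑ j ∈ s.filter (fun j => ¬(vv j = u ∨ vv j = -u)), c j * g j = 0 := by
    apply Finset.sum_eq_zero
    intro j hj
    rw [Finset.mem_filter] at hj
    push_neg at hj
    have hβ := ht2 j hj.1 hj.2.1 hj.2.2
    have e1 : aff (xs + t • a) (vv j) = aff xs (vv j) + t * dot a (sp (vv j)) :=
      aff_add_smul _ _ _ _
    have e2 : aff (xs + (-t) • a) (vv j) = aff xs (vv j) - t * dot a (sp (vv j)) := by
      rw [aff_add_smul]; ring
    have : g j = 0 := by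
      rw [hgdef]
      simp only
      rw [e1, e2]
      exact relu_bracket hβ
    rw [this, mul_zero]
  have hyes : ∑ j ∈ s.filter (fun j => vv j = u ∨ vv j = -u), c j * g j =
      (∑ j ∈ s.filter (fun j => vv j = u ∨ vv j = -u), c j) * (t * ‖a‖ ^ 2) := by
    rw [Finset.sum_mul]
    apply Finset.sum_congr rfl
    intro j hj
    rw [Finset.mem_filter] at hj
    have hβ0 : aff xs (vv j) = 0 := by
      rcases hj.2 with h | h
      · rw [h]; exact hxs2
      · rw [h, aff_neg, hxs2]; ring
    have hα : |dot a (sp (vv j))| = ‖a‖ ^ 2 := by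
      rcases hj.2 with h | h
      · rw [h, ← hadef, dot_self, abs_of_nonneg (by positivity)]
      · rw [h, sp_neg, dot_neg_right, ← hadef, dot_self, abs_neg,
          abs_of_nonneg (by positivity)]
    have e1 : aff (xs + t • a) (vv j) = 0 + t * dot a (sp (vv j)) := by
      rw [aff_add_smul, hβ0]
    have e2 : aff (xs + (-t) • a) (vv j) = 0 - t * dot a (sp (vv j)) := by
      rw [aff_add_smul, hβ0]; ring
    have hg : g j = t * ‖a‖ ^ 2 := by
      rw [hgdef]
      simp only
      rw [e1, e2, hβ0, relu_bracket0 _ _ ht3.le, hα]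
    rw [hg]
  rw [hyes, hnot, add_zero] at hkey
  rcases mul_eq_zero.1 hkey with h | h
  · exact h
  · exfalso
    have : t * ‖a‖ ^ 2 > 0 := by positivity
    linarith

lemma sq_half_of_abs_ge {b : ℝ} (h : Real.sqrt 2 / 2 ≤ |b|) : 1 / 2 ≤ b ^ 2 := by
  have h1 : (Real.sqrt 2 / 2) ^ 2 ≤ |b| ^ 2 :=
    pow_le_pow_left₀ (by positivity) h 2
  rwa [sq_abs, sq_sqrt2_half] at h1

lemma norm_sp_le {v : E (d+1)} (h1 : ‖v‖ = 1) (h2 : 1 / 2 ≤ (v (Fin.last d)) ^ 2) :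
    ‖sp v‖ ≤ |v (Fin.last d)| := by
  have hs := norm_sq_split v
  rw [h1] at hs
  apply le_of_pow_le_pow_left₀ (n := 2) (by norm_num) (abs_nonneg _)
  rw [sq_abs]
  nlinarith
lemma relu_aff_splus {v : E (d+1)} (h1 : ‖v‖ = 1) (h2 : Real.sqrt 2 / 2 ≤ v (Fin.last d))
    {x : E d} (hx : ‖x‖ ≤ 1) : relu (aff x v) = aff x v := by
  have hbpos : 0 ≤ v (Fin.last d) := le_trans (by positivity) h2
  have hsp := norm_sp_le h1 (sq_half_of_abs_ge (by rwa [abs_of_nonneg hbpos]))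
  rw [abs_of_nonneg hbpos] at hsp
  apply relu_of_nonneg
  rw [aff_eq]
  have h3 := abs_dot_le x (sp v)
  have h4 : ‖x‖ * ‖sp v‖ ≤ ‖sp v‖ := by
    nlinarith [norm_nonneg (sp v)]
  nlinarith [neg_abs_le (dot x (sp v))]

lemma relu_aff_sminus {v : E (d+1)} (h1 : ‖v‖ = 1) (h2 : v (Fin.last d) ≤ -(Real.sqrt 2 / 2))
    {x : E d} (hx : ‖x‖ ≤ 1) : relu (aff x v) = 0 := by
  have hbneg : v (Fin.last d) ≤ 0 := le_trans h2 (neg_nonpos.2 (by positivity))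
  have hsp := norm_sp_le h1 (sq_half_of_abs_ge (by rw [abs_of_nonpos hbneg]; linarith))
  rw [abs_of_nonpos hbneg] at hsp
  apply relu_of_nonpos
  rw [aff_eq]
  have h3 := abs_dot_le x (sp v)
  have h4 : ‖x‖ * ‖sp v‖ ≤ ‖sp v‖ := by
    nlinarith [norm_nonneg (sp v)]
  nlinarith [le_abs_self (dot x (sp v))]

open Classical in
lemma lemE {ι : Type*} (n : ℕ) (s : Finset ι) (c : ι → ℝ) (vv : ι → E (d+1))
    (ω : E (d+1)) (hcard : s.card ≤ n)
    (hS0 : ∀ j ∈ s, ‖vv j‖ = 1 ∧ |vv j (Fin.last d)| < Real.sqrt 2 / 2)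
    (hsum : ∀ x : E d, ‖x‖ ≤ 1 → (∑ j ∈ s, c j * relu (aff x (vv j))) = aff x ω) :
    ‖ω‖ ≤ (∑ j ∈ s, |c j|) / 2 := by
  induction n generalizing s c ω with
  | zero =>
    have hs : s = ∅ := Finset.card_eq_zero.1 (Nat.le_zero.1 hcard)
    subst hs
    have hω : ω = 0 := by
      apply eq_zero_of_aff_zero
      intro x hx
      have := hsum x hx
      simpa using this.symm
    rw [hω]
    simp
  | succ n ih =>
    rcases s.eq_empty_or_nonempty with hs | ⟨j0, hj0⟩
    · subst hs
      have hω : ω = 0 := by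
        apply eq_zero_of_aff_zero
        intro x hx
        have := hsum x hx
        simpa using this.symm
      rw [hω]; simp
    · set u := vv j0 with hudef
      obtain ⟨hu1, hu2⟩ := hS0 j0 hj0
      have hu1' : ‖u‖ = 1 := hu1
      have hune : u ≠ -u := by
        intro h
        have h0 : u + u = 0 := by nth_rewrite 2 [h]; simp
        have hz : u = 0 := by
          have h2 : (2:ℝ) • u = 0 := by rw [two_smul]; exact h0
          simpa using h2
        rw [hz] at hu1'
        simp at hu1'
      -- kink cancellation
      have hk : ∑ j ∈ s.filter (fun j => vv j = u ∨ vv j = -u), c j = 0 := by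
        apply kink s c vv (fun j hj => (hS0 j hj).1) (-ω) _ u hu1' hu2
        intro x hx
        rw [aff_neg, hsum x hx]; ring
      set A : ℝ := ∑ j ∈ s.filter (fun j => vv j = u), c j with hAdef
      set B : ℝ := ∑ j ∈ s.filter (fun j => vv j = -u), c j with hBdef
      have hdisj : Disjoint (s.filter (fun j => vv j = u)) (s.filter (fun j => vv j = -u)) := by
        rw [Finset.disjoint_left]
        intro j h1 h2
        rw [Finset.mem_filter] at h1 h2
        exact hune (h1.2 ▸ h2.2)
      have hunion : s.filter (fun j => vv j = u ∨ vv j = -u)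
          = s.filter (fun j => vv j = u) ∪ s.filter (fun j => vv j = -u) :=
        Finset.filter_or _ _ _
      have hAB : A + B = 0 := by
        rw [hAdef, hBdef, ← Finset.sum_union hdisj, ← hunion]
        exact hk
      -- pointwise identity for the rest
      have hrest : ∀ x : E d, ‖x‖ ≤ 1 →
          (∑ j ∈ s.filter (fun j => ¬ (vv j = u ∨ vv j = -u)), c j * relu (aff x (vv j))) = aff x (ω - A • u) := by
        intro x hx
        have hsplit := Finset.sum_filter_add_sum_filter_not s (fun j => vv j = u ∨ vv j = -u)
          (fun j => c j * relu (aff x (vv j)))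
        have hPsum : ∑ j ∈ s.filter (fun j => vv j = u ∨ vv j = -u), c j * relu (aff x (vv j)) = A * aff x u := by
          rw [hunion, Finset.sum_union hdisj]
          have e1 : ∑ j ∈ s.filter (fun j => vv j = u), c j * relu (aff x (vv j))
              = A * relu (aff x u) := by
            rw [hAdef, Finset.sum_mul]
            apply Finset.sum_congr rfl
            intro j hj
            rw [Finset.mem_filter] at hj
            rw [hj.2]
          have e2 : ∑ j ∈ s.filter (fun j => vv j = -u), c j * relu (aff x (vv j))
              = B * relu (- aff x u) := by
            rw [hBdef, Finset.sum_mul]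
            apply Finset.sum_congr rfl
            intro j hj
            rw [Finset.mem_filter] at hj
            rw [hj.2, aff_neg]
          rw [e1, e2]
          have hBA : B = -A := by linarith
          rw [hBA]
          have := relu_sub_relu_neg (aff x u)
          linear_combination A * this
        rw [aff_sub, aff_smul, ← hsum x hx, ← hsplit, hPsum]
        ring
      have hsubset : s.filter (fun j => ¬ (vv j = u ∨ vv j = -u)) ⊆ s.erase j0 := by
        intro j hj
        rw [Finset.mem_filter] at hj
        rw [Finset.mem_erase]
        refine ⟨?_, hj.1⟩
        intro h
        apply hj.2
        rw [h]
        exact Or.inl rfl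
      have hcard' : (s.filter (fun j => ¬ (vv j = u ∨ vv j = -u))).card ≤ n := by
        have h1 := Finset.card_le_card hsubset
        rw [Finset.card_erase_of_mem hj0] at h1
        have h2 : 1 ≤ s.card := Finset.card_pos.2 ⟨j0, hj0⟩
        omega
      have hih := ih (s.filter (fun j => ¬ (vv j = u ∨ vv j = -u))) c (ω - A • u) hcard'
        (fun j hj => hS0 j (Finset.mem_filter.1 hj).1) hrest
      -- |A| bound
      have hAbound : |A| ≤ (∑ j ∈ s.filter (fun j => vv j = u ∨ vv j = -u), |c j|) / 2 := by
        have h1 : |A| ≤ ∑ j ∈ s.filter (fun j => vv j = u), |c j| :=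
          Finset.abs_sum_le_sum_abs _ _
        have h2 : |A| ≤ ∑ j ∈ s.filter (fun j => vv j = -u), |c j| := by
          have : |B| ≤ ∑ j ∈ s.filter (fun j => vv j = -u), |c j| :=
            Finset.abs_sum_le_sum_abs _ _
          have hBA : B = -A := by linarith
          rw [hBA, abs_neg] at this
          exact this
        have h3 : ∑ j ∈ s.filter (fun j => vv j = u ∨ vv j = -u), |c j|
            = (∑ j ∈ s.filter (fun j => vv j = u), |c j|)
              + ∑ j ∈ s.filter (fun j => vv j = -u), |c j| := by
          rw [hunion, Finset.sum_union hdisj]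
        linarith
      have hfinal : ‖ω‖ ≤ ‖ω - A • u‖ + |A| := by
        calc ‖ω‖ = ‖(ω - A • u) + A • u‖ := by rw [sub_add_cancel]
        _ ≤ ‖ω - A • u‖ + ‖A • u‖ := norm_add_le _ _
        _ = ‖ω - A • u‖ + |A| := by rw [norm_smul, Real.norm_eq_abs, hu1, mul_one]
      have htotal : (∑ j ∈ s, |c j|) = (∑ j ∈ s.filter (fun j => vv j = u ∨ vv j = -u), |c j|)
          + ∑ j ∈ s.filter (fun j => ¬ (vv j = u ∨ vv j = -u)), |c j| :=
        (Finset.sum_filter_add_sum_filter_not s (fun j => vv j = u ∨ vv j = -u) _).symm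
      rw [htotal]
      linarith

end St2

open St2 in
/-- for f in reduced form, max{‖w‖₂, Σ|c_k|} ≤ κ(f) ≤ 2‖w‖₂ + Σ|c_k|. -/
theorem statement2 (d K : ℕ) (hd : 1 ≤ d) (c : Fin K → ℝ) (v : Fin K → E (d + 1))
    (w : E (d + 1)) (hv : ∀ k, v k ∈ Szero d)
    (hdist : ∀ i k, i ≠ k → v i ≠ v k ∧ v i ≠ -v k)
    (f : E d → ℝ)
    (hf : ∀ x : E d, ‖x‖ ≤ 1 → f x = (∑ k, c k * relu (aff x (v k))) + aff x w) :
    max ‖w‖ (∑ k, |c k|) ≤ kappaF f ∧ kappaF f ≤ 2 * ‖w‖ + ∑ k, |c k| := by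
  classical
  -- unpack Szero facts
  have hvk1 : ∀ k, ‖v k‖ = 1 := fun k => (hv k).1
  have hvk2 : ∀ k, |v k (Fin.last d)| < Real.sqrt 2 / 2 := by
    intro k
    have h2 := (hv k).2
    rw [Set.mem_union] at h2
    push_neg at h2
    obtain ⟨hm, hp⟩ := h2
    rw [abs_lt]
    constructor
    · by_contra hcon
      push_neg at hcon
      exact hm ⟨hvk1 k, by linarith⟩
    · by_contra hcon
      push_neg at hcon
      apply hp
      refine ⟨by rw [norm_neg]; exact hvk1 k, ?_⟩
      have : (-(v k)) (Fin.last d) = -(v k (Fin.last d)) := rfl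
      rw [this]
      linarith
  -- the canonical representation element (for upper bound and nonemptiness)
  set wh : E (d+1) := if w = 0 then EuclideanSpace.single (Fin.last d) 1 else ‖w‖⁻¹ • w
    with hwhdef
  have hwh1 : ‖wh‖ = 1 := by
    rw [hwhdef]
    split_ifs with h
    · rw [EuclideanSpace.norm_single]; simp
    · rw [norm_smul, Real.norm_eq_abs, abs_inv, abs_norm]
      exact inv_mul_cancel₀ (norm_ne_zero_iff.2 h)
  have hwhw : ‖w‖ • wh = w := by
    rw [hwhdef]
    split_ifs with h
    · rw [h]; simp
    · rw [smul_smul]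
      rw [mul_inv_cancel₀ (norm_ne_zero_iff.2 h), one_smul]
  set cbar : Fin (K+2) → ℝ := Fin.snoc (Fin.snoc c ‖w‖) (-‖w‖) with hcbardef
  set vbar : Fin (K+2) → E (d+1) := Fin.snoc (Fin.snoc v wh) (-wh) with hvbardef
  have hvbar1 : ∀ j, ‖vbar j‖ = 1 := by
    intro j
    refine Fin.lastCases ?_ (fun i => ?_) j
    · rw [hvbardef, Fin.snoc_last, norm_neg, hwh1]
    · rw [hvbardef, Fin.snoc_castSucc]
      refine Fin.lastCases ?_ (fun i' => ?_) i
      · rw [Fin.snoc_last, hwh1]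
      · rw [Fin.snoc_castSucc]; exact hvk1 i'
  have hrep : ∀ x : E d, ‖x‖ ≤ 1 → f x = ∑ j, cbar j * relu (aff x (vbar j)) := by
    intro x hx
    rw [Fin.sum_univ_castSucc, Fin.sum_univ_castSucc]
    simp only [hcbardef, hvbardef, Fin.snoc_last, Fin.snoc_castSucc]
    rw [hf x hx]
    have h1 : aff x w = ‖w‖ * aff x wh := by
      rw [← hwhw, aff_smul, hwhw]
    rw [aff_neg, h1]
    have h2 := relu_sub_relu_neg (aff x wh)
    linear_combination (-‖w‖) * h2
  have habssum : ∑ j, |cbar j| = ∑ k, |c k| + 2 * ‖w‖ := by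
    rw [Fin.sum_univ_castSucc, Fin.sum_univ_castSucc]
    simp only [hcbardef, Fin.snoc_last, Fin.snoc_castSucc, abs_neg, abs_norm]
    ring
  have hmem : (∑ k, |c k| + 2 * ‖w‖) ∈ {s | ∃ (m : ℕ) (c : Fin m → ℝ) (v : Fin m → E (d + 1)),
      (∀ j, ‖v j‖ = 1) ∧ (∀ x : E d, ‖x‖ ≤ 1 → f x = ∑ j, c j * relu (aff x (v j))) ∧
      s = ∑ j, |c j|} := ⟨K+2, cbar, vbar, hvbar1, hrep, habssum.symm⟩
  have hbdd : BddBelow {s | ∃ (m : ℕ) (c : Fin m → ℝ) (v : Fin m → E (d + 1)),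
      (∀ j, ‖v j‖ = 1) ∧ (∀ x : E d, ‖x‖ ≤ 1 → f x = ∑ j, c j * relu (aff x (v j))) ∧
      s = ∑ j, |c j|} := by
    refine ⟨0, ?_⟩
    rintro s ⟨m, c', v', _, _, rfl⟩
    positivity
  constructor
  · -- lower bound
    apply le_csInf ⟨_, hmem⟩
    rintro b ⟨m, c', v', hv', hfeq, rfl⟩
    -- combined list vanishing on the ball
    set C : Fin m ⊕ Fin K → ℝ := Sum.elim c' (fun k => -c k) with hCdef
    set V : Fin m ⊕ Fin K → E (d+1) := Sum.elim v' v with hVdef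
    have hunits : ∀ j ∈ (Finset.univ : Finset (Fin m ⊕ Fin K)), ‖V j‖ = 1 := by
      rintro (j | k) _
      · exact hv' j
      · exact hvk1 k
    have hsum0 : ∀ x : E d, ‖x‖ ≤ 1 →
        (∑ j ∈ Finset.univ, C j * relu (aff x (V j))) + aff x (-w) = 0 := by
      intro x hx
      rw [Fintype.sum_sum_type]
      simp only [hCdef, hVdef, Sum.elim_inl, Sum.elim_inr]
      have e1 : ∑ k, (-c k) * relu (aff x (v k)) = -∑ k, c k * relu (aff x (v k)) := by
        rw [← Finset.sum_neg_distrib]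
        exact Finset.sum_congr rfl (fun k _ => by ring)
      rw [e1, aff_neg, ← hfeq x hx, hf x hx]
      ring
    -- kink identity per k
    have hck : ∀ k, c k = ∑ j : Fin m, (if v' j = v k ∨ v' j = -(v k) then c' j else 0) := by
      intro k
      have hkk := kink Finset.univ C V hunits (-w) hsum0 (v k) (hvk1 k) (hvk2 k)
      rw [Finset.sum_filter, Fintype.sum_sum_type] at hkk
      simp only [hCdef, hVdef, Sum.elim_inl, Sum.elim_inr] at hkk
      have e2 : ∑ k', (if v k' = v k ∨ v k' = -(v k) then -c k' else 0) = -c k := by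
        rw [Finset.sum_eq_single_of_mem k (Finset.mem_univ k)]
        · rw [if_pos (Or.inl rfl)]
        · intro k' _ hne
          rw [if_neg]
          push_neg
          exact hdist k' k hne
      rw [e2] at hkk
      linarith
    have habs : ∀ k, |c k| ≤ ∑ j : Fin m, (if v' j = v k ∨ v' j = -(v k) then |c' j| else 0) := by
      intro k
      rw [hck k]
      refine le_trans (Finset.abs_sum_le_sum_abs _ _) ?_
      apply Finset.sum_le_sum
      intro j _
      rw [apply_ite abs, abs_zero]
    -- at most one k per j
    have honek : ∀ j : Fin m,
        ∑ k, (if v' j = v k ∨ v' j = -(v k) then |c' j| else 0) ≤ |c' j| := by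
      intro j
      by_cases hex : ∃ k0, v' j = v k0 ∨ v' j = -(v k0)
      · obtain ⟨k0, hk0⟩ := hex
        rw [Finset.sum_eq_single_of_mem k0 (Finset.mem_univ k0)]
        · rw [if_pos hk0]
        · intro k' _ hne
          rw [if_neg]
          intro hk'
          have hd' := hdist k' k0 hne
          rcases hk0 with h1 | h1 <;> rcases hk' with h2 | h2
          · exact hd'.1 (h2.symm.trans h1)
          · exact hd'.2 (neg_eq_iff_eq_neg.1 (h2.symm.trans h1))
          · exact hd'.2 (h2.symm.trans h1)
          · exact hd'.1 (neg_inj.1 (h2.symm.trans h1))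
      · push_neg at hex
        rw [Finset.sum_eq_zero]
        · positivity
        · intro k _
          rw [if_neg]
          push_neg
          exact hex k
    -- helper: sum over any superset t of all matched indices
    have hsumk : ∀ t : Finset (Fin m),
        (∀ k (j : Fin m), (v' j = v k ∨ v' j = -(v k)) → j ∈ t) →
        ∑ k, |c k| ≤ ∑ j ∈ t, |c' j| := by
      intro t ht
      have h1 : ∀ k, |c k| ≤ ∑ j ∈ t, (if v' j = v k ∨ v' j = -(v k) then |c' j| else 0) := by
        intro k
        refine le_trans (habs k) (le_of_eq ?_)
        symm
        apply Finset.sum_subset (Finset.subset_univ t)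
        intro j _ hjt
        rw [if_neg]
        intro hcon
        exact hjt (ht k j hcon)
      calc ∑ k, |c k| ≤ ∑ k, ∑ j ∈ t, (if v' j = v k ∨ v' j = -(v k) then |c' j| else 0) :=
            Finset.sum_le_sum (fun k _ => h1 k)
        _ = ∑ j ∈ t, ∑ k, (if v' j = v k ∨ v' j = -(v k) then |c' j| else 0) :=
            Finset.sum_comm
        _ ≤ ∑ j ∈ t, |c' j| := Finset.sum_le_sum (fun j _ => honek j)
    -- Goal A
    have hgoalA : ∑ k, |c k| ≤ ∑ j, |c' j| := hsumk Finset.univ (fun _ _ _ => Finset.mem_univ _)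
    -- Goal B
    set ZS : Finset (Fin m) := Finset.univ.filter
      (fun j => |v' j (Fin.last d)| < Real.sqrt 2 / 2) with hZSdef
    set PS : Finset (Fin m) := (Finset.univ.filter
      (fun j => ¬ (|v' j (Fin.last d)| < Real.sqrt 2 / 2))).filter
      (fun j => Real.sqrt 2 / 2 ≤ v' j (Fin.last d)) with hPSdef
    set W1 : E (d+1) := ∑ j ∈ PS, c' j • v' j with hW1def
    have hpoint : ∀ x : E d, ‖x‖ ≤ 1 →
        (∑ j ∈ ZS, c' j * relu (aff x (v' j))) = f x - aff x W1 := by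
      intro x hx
      have hsplit := Finset.sum_filter_add_sum_filter_not Finset.univ
        (fun j => |v' j (Fin.last d)| < Real.sqrt 2 / 2)
        (fun j => c' j * relu (aff x (v' j)))
      have hsplit2 := Finset.sum_filter_add_sum_filter_not
        (Finset.univ.filter (fun j => ¬ (|v' j (Fin.last d)| < Real.sqrt 2 / 2)))
        (fun j => Real.sqrt 2 / 2 ≤ v' j (Fin.last d))
        (fun j => c' j * relu (aff x (v' j)))
      have hMS : ∑ j ∈ (Finset.univ.filter
          (fun j => ¬ (|v' j (Fin.last d)| < Real.sqrt 2 / 2))).filter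
          (fun j => ¬ (Real.sqrt 2 / 2 ≤ v' j (Fin.last d))), c' j * relu (aff x (v' j)) = 0 := by
        apply Finset.sum_eq_zero
        intro j hj
        rw [Finset.mem_filter, Finset.mem_filter] at hj
        obtain ⟨⟨_, h1⟩, h2⟩ := hj
        push_neg at h1 h2
        have hble : v' j (Fin.last d) ≤ -(Real.sqrt 2 / 2) := by
          rcases abs_cases (v' j (Fin.last d)) with ⟨he, _⟩ | ⟨he, _⟩ <;> linarith
        rw [relu_aff_sminus (hv' j) hble hx, mul_zero]
      have hPSsum : ∑ j ∈ PS, c' j * relu (aff x (v' j)) = aff x W1 := by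
        rw [hW1def, aff_sum]
        apply Finset.sum_congr rfl
        intro j hj
        rw [hPSdef, Finset.mem_filter] at hj
        rw [relu_aff_splus (hv' j) hj.2 hx, aff_smul]
      have htot : ∑ j, c' j * relu (aff x (v' j)) = f x := (hfeq x hx).symm
      rw [← htot, ← hsplit, ← hsplit2, hMS, add_zero, ← hPSsum]
      rw [hZSdef]
      ring
    have hlemE : ‖w - W1‖ ≤ ((∑ j ∈ ZS, |c' j|) + ∑ k, |c k|) / 2 := by
      set s : Finset (Fin m ⊕ Fin K) := ZS.disjSum Finset.univ with hsdef
      apply le_of_le_of_eq (lemE s.card s C V (w - W1) le_rfl ?_ ?_)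
      · congr 1
        rw [hsdef, Finset.sum_disjSum]
        simp only [hCdef, Sum.elim_inl, Sum.elim_inr, abs_neg]
      · rintro (j | k) hj
        · rw [hsdef, Finset.inl_mem_disjSum, hZSdef, Finset.mem_filter] at hj
          exact ⟨hv' j, hj.2⟩
        · exact ⟨hvk1 k, hvk2 k⟩
      · intro x hx
        rw [hsdef, Finset.sum_disjSum]
        simp only [hCdef, hVdef, Sum.elim_inl, Sum.elim_inr]
        have e1 : ∑ k, (-c k) * relu (aff x (v k)) = -∑ k, c k * relu (aff x (v k)) := by
          rw [← Finset.sum_neg_distrib]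
          exact Finset.sum_congr rfl (fun k _ => by ring)
        rw [e1, hpoint x hx, aff_sub, hf x hx]
        ring
    have hZk : ∑ k, |c k| ≤ ∑ j ∈ ZS, |c' j| := by
      apply hsumk
      intro k j hcon
      rw [hZSdef, Finset.mem_filter]
      refine ⟨Finset.mem_univ j, ?_⟩
      rcases hcon with h | h
      · rw [h]; exact hvk2 k
      · rw [h]
        have : (-(v k)) (Fin.last d) = -(v k (Fin.last d)) := rfl
        rw [this, abs_neg]
        exact hvk2 k
    have hW1norm : ‖W1‖ ≤ ∑ j ∈ PS, |c' j| := by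
      rw [hW1def]
      refine le_trans (norm_sum_le _ _) ?_
      apply Finset.sum_le_sum
      intro j _
      rw [norm_smul, Real.norm_eq_abs, hv' j, mul_one]
    have hdisjZP : Disjoint ZS PS := by
      rw [hZSdef, hPSdef]
      rw [Finset.disjoint_left]
      intro j h1 h2
      rw [Finset.mem_filter] at h1
      rw [Finset.mem_filter, Finset.mem_filter] at h2
      exact h2.1.2 h1.2
    have hZPsub : ∑ j ∈ ZS, |c' j| + ∑ j ∈ PS, |c' j| ≤ ∑ j, |c' j| := by
      rw [← Finset.sum_union hdisjZP]
      apply Finset.sum_le_sum_of_subset_of_nonneg (Finset.subset_univ _)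
      intro j _ _
      positivity
    have hgoalB : ‖w‖ ≤ ∑ j, |c' j| := by
      have h1 : ‖w‖ ≤ ‖w - W1‖ + ‖W1‖ := by
        calc ‖w‖ = ‖(w - W1) + W1‖ := by rw [sub_add_cancel]
        _ ≤ ‖w - W1‖ + ‖W1‖ := norm_add_le _ _
      have h2 : ‖w - W1‖ ≤ ∑ j ∈ ZS, |c' j| := by
        refine le_trans hlemE ?_
        linarith [hZk]
      linarith
    exact max_le hgoalB hgoalA
  · -- upper bound
    rw [kappaF]
    refine le_trans (csInf_le hbdd hmem) ?_
    linarith
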